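/- (Theorem 2a) Let G = D − VVᵀ be positive definite, where D is diagonal with positive diagonal and V is an n×k real matrix. Let a* ∈ ℤⁿ \ {0} minimize aᵀGa over nonzero integer vectors. Then either a* is a signed standard unit vector, or, setting x = Vᵀa* ∈ ℝᵏ, we have a* − (1/2)𝟙 < D⁻¹Vx < a* + (1/2)𝟙 componentwise, hence a* = round(D⁻¹Vx). -/

import Mathlib

open Matrix BigOperators

theorem stmt11 {n k : ℕ} (D : Matrix (Fin n) (Fin n) ℝ) (hD : D.IsDiag)
    (hDpos : ∀ i, 0 < D i i) (V : Matrix (Fin n) (Fin k) ℝ)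
    (hG : (D - V * Vᵀ).PosDef)
    (a : Fin n → ℤ) (ha : a ≠ 0)
    (hmin : ∀ b : Fin n → ℤ, b ≠ 0 →
      (fun i => (a i : ℝ)) ⬝ᵥ (D - V * Vᵀ).mulVec (fun i => (a i : ℝ)) ≤
      (fun i => (b i : ℝ)) ⬝ᵥ (D - V * Vᵀ).mulVec (fun i => (b i : ℝ))) :
    (∃ j, (∀ i, i ≠ j → a i = 0) ∧ (a j = 1 ∨ a j = -1)) ∨
    (∀ i,
      ((a i : ℝ) - 1 / 2 <
          (D⁻¹ * V).mulVec (Vᵀ.mulVec (fun l => (a l : ℝ))) i ∧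
        (D⁻¹ * V).mulVec (Vᵀ.mulVec (fun l => (a l : ℝ))) i <
          (a i : ℝ) + 1 / 2) ∧
      a i = round ((D⁻¹ * V).mulVec (Vᵀ.mulVec (fun l => (a l : ℝ))) i)) := by
  by_cases hcase : ∃ j, (∀ i, i ≠ j → a i = 0) ∧ (a j = 1 ∨ a j = -1)
  · exact Or.inl hcase
  right
  push_neg at hcase
  set a' : Fin n → ℝ := fun i => (a i : ℝ) with ha'
  set G := D - V * Vᵀ with hGdef
  have hGsymm : Gᵀ = G := by
    rw [hGdef, Matrix.transpose_sub, Matrix.transpose_mul, Matrix.transpose_transpose,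
      hD.isSymm]
  have hswap : ∀ u : Fin n → ℝ, a' ⬝ᵥ G.mulVec u = u ⬝ᵥ G.mulVec a' := by
    intro u
    rw [Matrix.dotProduct_mulVec, ← hGsymm, Matrix.vecMul_transpose, dotProduct_comm,
      hGsymm]
  intro i
  set d : ℝ := D i i with hd
  have hdpos : 0 < d := hDpos i
  set w : Fin n → ℝ := (V * Vᵀ).mulVec a' with hw
  set g : ℝ := G.mulVec a' i with hg
  have hDv : D.mulVec a' i = d * a' i := by
    conv_lhs => rw [← hD.diagonal_diag]
    rw [Matrix.mulVec_diagonal]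
    rfl
  have hgdw : g = d * a' i - w i := by
    rw [hg, hGdef, Matrix.sub_mulVec]
    simp [hDv, hw]
  -- the target value t
  have h2 : D⁻¹ = Matrix.diagonal (fun j => (D j j)⁻¹) := by
    apply Matrix.inv_eq_right_inv
    ext p q
    rw [Matrix.mul_diagonal]
    by_cases hpq : p = q
    · subst hpq
      rw [mul_inv_cancel₀ (hDpos p).ne', Matrix.one_apply_eq]
    · rw [hD hpq, zero_mul, Matrix.one_apply_ne hpq]
  have htval : (D⁻¹ * V).mulVec (Vᵀ.mulVec a') i = d⁻¹ * w i := by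
    rw [Matrix.mulVec_mulVec, Matrix.mul_assoc, ← Matrix.mulVec_mulVec, hw.symm, h2,
      Matrix.mulVec_diagonal]
  set t : ℝ := (D⁻¹ * V).mulVec (Vᵀ.mulVec a') i with ht
  -- key inequality from minimality
  have key : ∀ ε : ℤ, ε = 1 ∨ ε = -1 → 0 ≤ 2 * (ε : ℝ) * g + G i i := by
    intro ε hε
    set b : Fin n → ℤ := a + Pi.single i ε with hb
    have hbne : b ≠ 0 := by
      intro h0
      have hzero : ∀ j, j ≠ i → a j = 0 := by
        intro j hj
        have := congrFun h0 j
        simpa [hb, Pi.single_apply, hj] using this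
      have hai : a i = -ε := by
        have := congrFun h0 i
        simp [hb, Pi.single_apply] at this
        linarith
      rcases hε with rfl | rfl
      · exact (hcase i hzero).2 (by omega)
      · exact (hcase i hzero).1 (by omega)
    have hmb := hmin b hbne
    have hbcast : (fun j => ((b j : ℤ) : ℝ)) = a' + (ε : ℝ) • (Pi.single i (1 : ℝ) : Fin n → ℝ) := by
      funext j
      by_cases hj : j = i
      · subst hj; simp [hb, Pi.single_apply]; rfl
      · simp [hb, Pi.single_apply, hj]; rfl
    rw [hbcast] at hmb
    set u : Fin n → ℝ := Pi.single i (1 : ℝ) with hu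
    have hexp : (a' + (ε : ℝ) • u) ⬝ᵥ G.mulVec (a' + (ε : ℝ) • u) =
        a' ⬝ᵥ G.mulVec a' + 2 * (ε : ℝ) * g + (ε : ℝ) * (ε : ℝ) * G i i := by
      have hGu : G.mulVec u = fun j => G j i := by
        rw [hu]
        rw [Matrix.mulVec_single]
        simp
        rfl
      have h1 : u ⬝ᵥ G.mulVec a' = g := by
        rw [hu, single_dotProduct, one_mul, hg]
      have h3 : u ⬝ᵥ G.mulVec u = G i i := by
        rw [hGu, hu, single_dotProduct, one_mul]
      rw [Matrix.mulVec_add, Matrix.mulVec_smul, dotProduct_add,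
        add_dotProduct, add_dotProduct, dotProduct_smul,
        smul_dotProduct, smul_dotProduct, dotProduct_smul,
        hswap u, h1, h3]
      ring_nf
    rw [hexp] at hmb
    have hε2 : (ε : ℝ) * (ε : ℝ) = 1 := by
      rcases hε with rfl | rfl <;> norm_num
    rw [hε2, one_mul] at hmb
    linarith
  have k1 := key 1 (Or.inl rfl)
  have k2 := key (-1) (Or.inr rfl)
  push_cast at k1 k2
  -- G i i = d - (V*Vᵀ) i i, and (V*Vᵀ) i i ≥ 0
  set s : ℝ := (V * Vᵀ) i i with hs
  have hGii : G i i = d - s := by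
    rw [hGdef]; simp [hs, hd]
  have hs_eq : s = ∑ l, V i l ^ 2 := by
    rw [hs, Matrix.mul_apply]
    congr 1; funext l; rw [Matrix.transpose_apply]; ring
  have hs_nonneg : 0 ≤ s := by
    rw [hs_eq]; positivity
  -- main strict bound: |a' i - t| < 1/2
  have hbound : (a' i : ℝ) - 1 / 2 < t ∧ t < a' i + 1 / 2 := by
    have htw : t = d⁻¹ * w i := htval
    rcases eq_or_lt_of_le hs_nonneg with hs0 | hspos
    · -- s = 0 : row i of V is zero, so w i = 0 and a i = 0
      have hVrow : ∀ l, V i l = 0 := by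
        intro l
        have hsum : ∑ l, V i l ^ 2 = 0 := by rw [← hs_eq, ← hs0]
        have := (Finset.sum_eq_zero_iff_of_nonneg
          (fun l _ => sq_nonneg (V i l))).mp hsum l (Finset.mem_univ l)
        exact pow_eq_zero_iff (by norm_num) |>.mp this
      have hwi : w i = 0 := by
        rw [hw, Matrix.mulVec, dotProduct]
        apply Finset.sum_eq_zero
        intro j _
        rw [Matrix.mul_apply]
        have : ∑ l, V i l * Vᵀ l j = 0 := by
          apply Finset.sum_eq_zero; intro l _; rw [hVrow l, zero_mul]
        rw [this, zero_mul]
      have hgval : g = d * a' i := by rw [hgdw, hwi, sub_zero]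
      have hGiid : G i i = d := by rw [hGii, ← hs0, sub_zero]
      rw [hgval, hGiid] at k1 k2
      have hai : a i = 0 := by
        by_contra hne
        have h1 : (1 : ℝ) ≤ |a' i| := by
          have h0 : (1 : ℤ) ≤ |a i| := by
            rcases lt_or_gt_of_ne hne with h | h
            · calc (1:ℤ) ≤ -(a i) := by omega
                _ ≤ |a i| := neg_le_abs (a i)
            · calc (1:ℤ) ≤ a i := by omega
                _ ≤ |a i| := le_abs_self _
          calc (1 : ℝ) ≤ ((|a i| : ℤ) : ℝ) := by exact_mod_cast h0
          _ = |a' i| := by push_cast [ha']; rfl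
        rcases le_abs.mp h1 with h | h
        · nlinarith
        · nlinarith
      have : a' i = 0 := by simp [ha', hai]
      rw [this, htw, hwi, mul_zero]
      constructor <;> linarith
    · -- s > 0 : G i i < d
      have habs : |2 * g| ≤ G i i := by
        rw [abs_le]; constructor <;> linarith
      have hlt : |2 * g| < d := lt_of_le_of_lt habs (by rw [hGii]; linarith)
      have hgval : g = d * (a' i - t) := by
        rw [hgdw, htw]
        field_simp
      rw [hgval] at hlt
      have h2d : |a' i - t| * (2 * d) < d := by
        calc |a' i - t| * (2 * d) = |2 * (d * (a' i - t))| := by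
              rw [abs_mul, abs_mul, abs_of_pos hdpos, abs_of_pos (by norm_num : (0:ℝ) < 2)]
              ring
        _ < d := hlt
      have : |a' i - t| < 1 / 2 := by
        by_contra hc
        push_neg at hc
        nlinarith
      rcases abs_lt.mp this with ⟨hl, hr⟩
      constructor <;> linarith
  refine ⟨hbound, ?_⟩
  rw [round_eq]
  symm
  rw [Int.floor_eq_iff]
  constructor
  · have := hbound.1; simp only [ha'] at this ⊢; linarith
  · have := hbound.2; simp only [ha'] at this ⊢; push_cast; linarith
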